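/- Helstrom's theorem: given two density operators ρ and σ with uniform prior (each with probability 1/2), the maximum probability of correctly identifying the state with a two-outcome POVM {Λ, I-Λ} equals 1/2 + (1/4)‖ρ - σ‖₁. -/

import Mathlib

open scoped Matrix Kronecker ComplexOrder

noncomputable section

noncomputable def traceNorm {n : Type*} [Fintype n] [DecidableEq n] (A : Matrix n n ℂ) : ℝ :=
  (((Matrix.posSemidef_conjTranspose_mul_self A).1.eigenvectorUnitary.1 *
    Matrix.diagonal (((↑) : ℝ → ℂ) ∘ Real.sqrt ∘ (Matrix.posSemidef_conjTranspose_mul_self A).1.eigenvalues) *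
    (star (Matrix.posSemidef_conjTranspose_mul_self A).1.eigenvectorUnitary : Matrix n n ℂ)).trace).re

noncomputable def vnEntropy {n : Type*} [Fintype n] [DecidableEq n] (ρ : Matrix n n ℂ) : ℝ :=
  if h : ρ.IsHermitian then -∑ i, (h.eigenvalues i * Real.log (h.eigenvalues i)) else 0

def ptraceL {a b : Type*} [Fintype a] (M : Matrix (a × b) (a × b) ℂ) : Matrix b b ℂ :=
  Matrix.of fun i j => ∑ k : a, M (k, i) (k, j)

def ptraceR {a b : Type*} [Fintype b] (M : Matrix (a × b) (a × b) ℂ) : Matrix a a ℂ :=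
  Matrix.of fun i j => ∑ k : b, M (i, k) (j, k)

def ptrace3M {a b c : Type*} [Fintype b] (M : Matrix (a × b × c) (a × b × c) ℂ) :
    Matrix (a × c) (a × c) ℂ :=
  Matrix.of fun i j => ∑ k : b, M (i.1, k, i.2) (j.1, k, j.2)

open scoped Classical in
noncomputable def msqrt {n : Type*} [Fintype n] [DecidableEq n] (A : Matrix n n ℂ) :
    Matrix n n ℂ :=
  if h : A.PosSemidef then
    h.1.eigenvectorUnitary.1 * Matrix.diagonal (((↑) : ℝ → ℂ) ∘ Real.sqrt ∘ h.1.eigenvalues) *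
      (star h.1.eigenvectorUnitary : Matrix n n ℂ) else 0

noncomputable def fidelity {n : Type*} [Fintype n] [DecidableEq n] (ρ σ : Matrix n n ℂ) : ℝ :=
  (((msqrt (msqrt σ * ρ * msqrt σ)).trace).re) ^ 2

def outer {n : Type*} (v : n → ℂ) : Matrix n n ℂ :=
  Matrix.of fun i j => v i * (starRingEnd ℂ) (v j)

def krausApply {ι a b : Type*} [Fintype ι] [Fintype a]
    (K : ι → Matrix b a ℂ) (ρ : Matrix a a ℂ) : Matrix b b ℂ :=
  ∑ i, K i * ρ * (K i)ᴴ

open Matrix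

section Helpers

variable {n : Type*} [Fintype n] [DecidableEq n]

lemma trace_conj_diag (U : Matrix.unitaryGroup n ℂ) (f : n → ℂ) :
    ((U : Matrix n n ℂ) * diagonal f * star (U : Matrix n n ℂ)).trace = ∑ i, f i := by
  rw [trace_mul_cycle, Unitary.coe_star_mul_self, one_mul, trace_diagonal]

lemma conj_mul_conj (U : Matrix.unitaryGroup n ℂ) (f g : n → ℂ) :
    ((U : Matrix n n ℂ) * diagonal f * star (U : Matrix n n ℂ)) *
      ((U : Matrix n n ℂ) * diagonal g * star (U : Matrix n n ℂ)) =
    (U : Matrix n n ℂ) * diagonal (f * g) * star (U : Matrix n n ℂ) := by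
  have h1 : star (U : Matrix n n ℂ) * (U : Matrix n n ℂ) = 1 := Unitary.coe_star_mul_self U
  calc ((U : Matrix n n ℂ) * diagonal f * star (U : Matrix n n ℂ)) *
      ((U : Matrix n n ℂ) * diagonal g * star (U : Matrix n n ℂ))
      = (U : Matrix n n ℂ) * (diagonal f * ((star (U : Matrix n n ℂ) * (U : Matrix n n ℂ)) *
          (diagonal g * star (U : Matrix n n ℂ)))) := by simp only [mul_assoc]
    _ = (U : Matrix n n ℂ) * (diagonal f * (diagonal g * star (U : Matrix n n ℂ))) := by
        rw [h1, one_mul]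
    _ = _ := by rw [← mul_assoc (diagonal f), diagonal_mul_diagonal]; simp only [mul_assoc]; rfl

open scoped MatrixOrder in
lemma traceNorm_of_hermitian (A : Matrix n n ℂ) (hA : A.IsHermitian) :
    traceNorm A = ∑ i, |hA.eigenvalues i| := by
  set U := hA.eigenvectorUnitary with hUdef
  set d := hA.eigenvalues with hddef
  set S : Matrix n n ℂ := (U : Matrix n n ℂ) * diagonal (fun i => ((|d i| : ℝ) : ℂ)) *
    star (U : Matrix n n ℂ) with hSdef
  have hSpsd : S.PosSemidef := by
    exact (posSemidef_diagonal_iff.mpr fun i => by positivity).mul_mul_conjTranspose_same _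
  have hsq : S ^ 2 = Aᴴ * A := by
    have hAe := hA.spectral_theorem
    rw [Unitary.conjStarAlgAut_apply] at hAe
    rw [pow_two, hSdef, conj_mul_conj, hA.eq]
    conv_rhs => rw [hAe]
    rw [conj_mul_conj]
    have : (fun i => ((|d i| : ℝ) : ℂ)) * (fun i => ((|d i| : ℝ) : ℂ))
        = (RCLike.ofReal ∘ d) * (RCLike.ofReal ∘ d) := by
      funext i
      show ((|d i| : ℝ) : ℂ) * ((|d i| : ℝ) : ℂ) = ((d i : ℝ) : ℂ) * ((d i : ℝ) : ℂ)
      rw [← Complex.ofReal_mul, ← Complex.ofReal_mul, abs_mul_abs_self]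
    rw [this]
  have hS : CFC.sqrt (Aᴴ * A) = S := CFC.sqrt_unique (by rw [← hsq, pow_two]) hSpsd.nonneg
  rw [CFC.sqrt_eq_real_sqrt _ (posSemidef_conjTranspose_mul_self A).nonneg,
    cfcₙ_eq_cfc (hf0 := Real.sqrt_zero), (posSemidef_conjTranspose_mul_self A).1.cfc_eq,
    IsHermitian.cfc, Unitary.conjStarAlgAut_apply] at hS
  have hTS : traceNorm A = (S.trace).re := by rw [← hS]; rfl
  rw [hTS, hSdef, trace_conj_diag]
  simp

lemma diag_nonneg_of_psd (X : Matrix n n ℂ) (hX : X.PosSemidef) (i : n) :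
    0 ≤ X i i := by
  exact hX.diag_nonneg

lemma trace_mul_diagonal' (X : Matrix n n ℂ) (f : n → ℂ) :
    (X * diagonal f).trace = ∑ i, X i i * f i := by
  simp [Matrix.trace, Matrix.diag, mul_diagonal]

end Helpers

theorem helstrom {n : Type*} [Fintype n] [DecidableEq n]
    (ρ σ : Matrix n n ℂ) (hρ : ρ.PosSemidef) (hρ1 : ρ.trace = 1)
    (hσ : σ.PosSemidef) (hσ1 : σ.trace = 1) :
    IsGreatest {r : ℝ | ∃ Λ : Matrix n n ℂ, Λ.PosSemidef ∧ (1 - Λ).PosSemidef ∧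
        r = (1/2) * ((Λ * ρ).trace).re + (1/2) * (((1 - Λ) * σ).trace).re}
      (1/2 + (1/4) * traceNorm (ρ - σ)) := by
  have hΔ : (ρ - σ).IsHermitian := hρ.1.sub hσ.1
  set Δ := ρ - σ with hΔdef
  set U := hΔ.eigenvectorUnitary with hUdef
  set d := hΔ.eigenvalues with hddef
  have hspec := hΔ.spectral_theorem
  rw [Unitary.conjStarAlgAut_apply] at hspec
  have hTN : traceNorm Δ = ∑ i, |d i| := traceNorm_of_hermitian Δ hΔ
  have htrΔ : Δ.trace = 0 := by
    rw [hΔdef, trace_sub, hρ1, hσ1, sub_self]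
  have hsum : ∑ i, d i = 0 := by
    have h1 : Δ.trace = ∑ i, ((d i : ℝ) : ℂ) := by
      conv_lhs => rw [hspec]
      rw [trace_conj_diag]
      rfl
    rw [htrΔ] at h1
    have := h1.symm
    rw [← Complex.ofReal_sum] at this
    exact_mod_cast this
  -- the generic value formula
  have hrEq : ∀ Λ : Matrix n n ℂ,
      (1/2 : ℝ) * ((Λ * ρ).trace).re + (1/2) * (((1 - Λ) * σ).trace).re
        = 1/2 + (1/2) * ((Λ * Δ).trace).re := by
    intro Λ
    have h1 : ((1 - Λ) * σ).trace = σ.trace - (Λ * σ).trace := by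
      rw [sub_mul, one_mul, trace_sub]
    have h2 : (Λ * Δ).trace = (Λ * ρ).trace - (Λ * σ).trace := by
      rw [hΔdef, mul_sub, trace_sub]
    rw [h1, h2, hσ1]
    simp only [Complex.sub_re, Complex.one_re]
    ring
  -- trace against the eigenbasis
  have htr : ∀ Λ : Matrix n n ℂ,
      (Λ * Δ).trace = ∑ i, (star (U : Matrix n n ℂ) * (Λ * (U : Matrix n n ℂ))) i i *
        ((d i : ℝ) : ℂ) := by
    intro Λ
    conv_lhs => rw [hspec]
    rw [← mul_assoc, ← mul_assoc, trace_mul_cycle, trace_mul_diagonal']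
    rfl
  have hhalf : ∑ i, (|d i| + d i) / 2 = traceNorm Δ / 2 := by
    rw [← Finset.sum_div, Finset.sum_add_distrib, hsum, add_zero, hTN]
  constructor
  · -- membership: the projector onto the nonnegative eigenspace
    set p : n → ℂ := fun i => if 0 ≤ d i then 1 else 0 with hpdef
    set Λ₀ : Matrix n n ℂ := (U : Matrix n n ℂ) * diagonal p * star (U : Matrix n n ℂ)
      with hΛ₀def
    have hppos : ∀ i, (0 : ℂ) ≤ p i := by
      intro i; rw [hpdef]; dsimp only; split
      · exact zero_le_one
      · exact le_refl 0
    have hΛ₀psd : Λ₀.PosSemidef :=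
      (posSemidef_diagonal_iff.mpr hppos).mul_mul_conjTranspose_same _
    have h1m : 1 - Λ₀ = (U : Matrix n n ℂ) * diagonal (fun i => 1 - p i) *
        star (U : Matrix n n ℂ) := by
      have : diagonal (fun i => (1 : ℂ) - p i) = 1 - diagonal p := by
        rw [← diagonal_one, diagonal_sub]
      have hUsU : (U : Matrix n n ℂ) * star (U : Matrix n n ℂ) = 1 :=
        (Matrix.mem_unitaryGroup_iff).mp U.2
      rw [this, mul_sub, mul_one, sub_mul, hUsU, hΛ₀def]
    have h1mpsd : (1 - Λ₀).PosSemidef := by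
      rw [h1m]
      refine (posSemidef_diagonal_iff.mpr fun i => ?_).mul_mul_conjTranspose_same _
      rw [hpdef]; dsimp only; split
      · simp
      · simp
    refine ⟨Λ₀, hΛ₀psd, h1mpsd, ?_⟩
    rw [hrEq]
    have hval : (Λ₀ * Δ).trace = ∑ i, p i * ((d i : ℝ) : ℂ) := by
      conv_lhs => rw [hΛ₀def, hspec]
      rw [conj_mul_conj, trace_conj_diag]
      rfl
    have : ((Λ₀ * Δ).trace).re = ∑ i, (|d i| + d i) / 2 := by
      rw [hval]
      rw [Complex.re_sum]
      refine Finset.sum_congr rfl fun i _ => ?_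
      rw [hpdef]; dsimp only; split
      · rename_i h
        rw [abs_of_nonneg h, one_mul, Complex.ofReal_re]; ring
      · rename_i h
        rw [abs_of_neg (lt_of_not_ge h), zero_mul, Complex.zero_re]; ring
    rw [this, hhalf]
    ring
  · -- upper bound
    rintro r ⟨Λ, hΛ, h1Λ, hr⟩
    rw [hr, hrEq]
    set M : Matrix n n ℂ := star (U : Matrix n n ℂ) * (Λ * (U : Matrix n n ℂ)) with hMdef
    have hMpsd : M.PosSemidef := by
      have := hΛ.mul_mul_conjTranspose_same (star (U : Matrix n n ℂ))
      simpa [hMdef, star_eq_conjTranspose, Matrix.conjTranspose_conjTranspose,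
        mul_assoc] using this
    have h1M : 1 - M = star (U : Matrix n n ℂ) * ((1 - Λ) * (U : Matrix n n ℂ)) := by
      rw [sub_mul, one_mul, mul_sub, Unitary.coe_star_mul_self, hMdef]
    have h1Mpsd : (1 - M).PosSemidef := by
      rw [h1M]
      have := h1Λ.mul_mul_conjTranspose_same (star (U : Matrix n n ℂ))
      simpa [star_eq_conjTranspose, Matrix.conjTranspose_conjTranspose, mul_assoc] using this
    have hMre : ∀ i, 0 ≤ (M i i).re ∧ (M i i).re ≤ 1 := by
      intro i
      have h1 := diag_nonneg_of_psd M hMpsd i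
      have h2 := diag_nonneg_of_psd _ h1Mpsd i
      rw [Matrix.sub_apply, Matrix.one_apply_eq] at h2
      constructor
      · exact (Complex.nonneg_iff.mp h1).1
      · have := (Complex.nonneg_iff.mp h2).1
        rw [Complex.sub_re, Complex.one_re] at this
        linarith
    have hbound : ((Λ * Δ).trace).re ≤ traceNorm Δ / 2 := by
      rw [htr Λ, Complex.re_sum, ← hhalf]
      refine Finset.sum_le_sum fun i _ => ?_
      have hre : (M i i * ((d i : ℝ) : ℂ)).re = (M i i).re * d i := by
        simp [Complex.mul_re]
      rw [← hMdef, hre]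
      rcases le_or_gt 0 (d i) with h | h
      · rw [abs_of_nonneg h]
        have : (M i i).re * d i ≤ 1 * d i :=
          mul_le_mul_of_nonneg_right (hMre i).2 h
        linarith
      · rw [abs_of_neg h]
        have : (M i i).re * d i ≤ 0 := mul_nonpos_of_nonneg_of_nonpos (hMre i).1 h.le
        linarith
    linarith
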